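/- arXiv:2511.01114 — 3 statements merged into one kernel-verified Lean document; each statement's English description precedes it below -/
import Mathlib

section
/- Define $q_n(X;t)$ by the generating function $\prod_{x \in X} \frac{1-txz}{1-xz} = \sum_{n \geq 0} q_n(X;t) z^n$. Then for all $n \geq 1$, $q_n = \sum_{|\lambda|=n} (1-t)^{\ell(\lambda)} m_\lambda$, where the sum ranges over partitions $\lambda$ of $n$, $\ell(\lambda)$ is the number of nonzero parts of $\lambda$, and $m_\lambda$ is the monomial symmetric function. -/
noncomputable section

open scoped Classical

/-- The generating function `∏_{i} (1 - t xᵢ z)(1 - xᵢ z)⁻¹ = Σₙ qₙ zⁿ`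
over symmetric polynomials in the variables `x₁, …, x_N`. -/
def alphaGF (R : Type*) [CommRing R] (t : R) (N : ℕ) :
    PowerSeries (MvPolynomial (Fin N) R) :=
  ∏ i : Fin N,
    ((1 - PowerSeries.C (MvPolynomial.C t * MvPolynomial.X i) * PowerSeries.X) *
      Ring.inverse (1 - PowerSeries.C (MvPolynomial.X i) * PowerSeries.X))

namespace QAux

open PowerSeries

variable {A : Type*} [CommRing A]

lemma geom_mul (a : A) :
    (1 - PowerSeries.C a * PowerSeries.X) * PowerSeries.mk (fun k => a ^ k) = 1 := by
  ext n
  rw [sub_mul, one_mul, map_sub, mul_assoc]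
  cases n with
  | zero => simp
  | succ n => simp [coeff_succ_X_mul, pow_succ, mul_comm]

lemma inverse_geom (a : A) :
    Ring.inverse (1 - PowerSeries.C a * PowerSeries.X) = PowerSeries.mk fun k => a ^ k := by
  have h := geom_mul a
  obtain ⟨u, hu⟩ := IsUnit.of_mul_eq_one _ h
  rw [← hu, Ring.inverse_unit]
  exact Units.inv_eq_of_mul_eq_one_right (by rw [hu]; exact h)

lemma factor_eq {R : Type*} [CommRing R] (t : R) {N : ℕ} (i : Fin N) :
    (1 - PowerSeries.C (MvPolynomial.C t * MvPolynomial.X i) * PowerSeries.X) *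
      Ring.inverse (1 - PowerSeries.C (MvPolynomial.X i) * PowerSeries.X) =
    PowerSeries.mk (fun k => if k = 0 then 1
      else MvPolynomial.C (1 - t) * MvPolynomial.X i ^ k) := by
  rw [inverse_geom]
  ext n
  rw [sub_mul, one_mul, map_sub, mul_assoc]
  cases n with
  | zero => simp
  | succ n =>
    simp only [coeff_mk, coeff_C_mul, coeff_succ_X_mul, Nat.succ_ne_zero, if_false]
    congr 1
    rw [map_sub, map_one]
    ring

end QAux

/-- for `n ≥ 1`,
`qₙ = Σ_{|λ| = n} (1-t)^{ℓ(λ)} m_λ`, the sum over partitions `λ` of `n`. -/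
theorem q_eq_sum_monomial_symmetric (R : Type*) [CommRing R] (t : R) (N n : ℕ) (hn : 1 ≤ n) :
    PowerSeries.coeff n (alphaGF R t N) =
      ∑ P : Nat.Partition n,
        MvPolynomial.C ((1 - t) ^ Multiset.card P.parts) * MvPolynomial.msymm (Fin N) R P := by
  classical
  rw [alphaGF]
  have hfac : ∀ i : Fin N,
      (1 - PowerSeries.C (MvPolynomial.C t * MvPolynomial.X i) * PowerSeries.X) *
        Ring.inverse (1 - PowerSeries.C (MvPolynomial.X i) * PowerSeries.X) =
      PowerSeries.mk (fun k => if k = 0 then 1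
        else MvPolynomial.C (1 - t) * MvPolynomial.X i ^ k) := fun i => QAux.factor_eq t i
  simp only [hfac]
  rw [PowerSeries.coeff_prod]
  simp only [PowerSeries.coeff_mk]
  -- LHS: each product over Fin N collapses to a single monomial
  have hprod : ∀ l : Fin N →₀ ℕ,
      (∏ i : Fin N, if l i = 0 then (1 : MvPolynomial (Fin N) R)
        else MvPolynomial.C (1 - t) * MvPolynomial.X i ^ l i) =
      MvPolynomial.C ((1 - t) ^ l.support.card) * MvPolynomial.monomial l 1 := by
    intro l
    rw [← Finset.prod_subset (Finset.subset_univ l.support)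
      (fun i _ hi => by rw [if_pos (by simpa using Finsupp.notMem_support_iff.mp hi)])]
    rw [Finset.prod_congr rfl (fun i hi => if_neg (Finsupp.mem_support_iff.mp hi)),
      Finset.prod_mul_distrib, Finset.prod_const, ← map_pow,
      MvPolynomial.monomial_eq, map_one, one_mul, Finsupp.prod]
  simp only [hprod]
  -- RHS: unfold msymm and combine the double sum into a sum over Sym (Fin N) n
  simp only [MvPolynomial.msymm, Finset.mul_sum]
  have hsig :
      (∑ P : Nat.Partition n, ∑ s : {a : Sym (Fin N) n // Nat.Partition.ofSym a = P},
        MvPolynomial.C ((1 - t) ^ Multiset.card P.parts) * (s.1.1.map MvPolynomial.X).prod) =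
      ∑ a : Sym (Fin N) n,
        MvPolynomial.C ((1 - t) ^ Multiset.card (Nat.Partition.ofSym a).parts) *
          (a.1.map MvPolynomial.X).prod := by
    rw [Finset.sum_sigma', Finset.univ_sigma_univ]
    apply Fintype.sum_equiv (Equiv.sigmaFiberEquiv (fun a : Sym (Fin N) n => Nat.Partition.ofSym a))
    rintro ⟨P, s, hs⟩
    subst hs
    rfl
  rw [hsig]
  have hkey : ∀ l ∈ Finset.finsuppAntidiag (Finset.univ : Finset (Fin N)) n,
      Multiset.card (Finsupp.toMultiset l) = n := by
    intro l hl
    rw [Finsupp.card_toMultiset]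
    have h1 := (Finset.mem_finsuppAntidiag.mp hl).1
    rw [Finsupp.sum, ← h1]
    exact Finset.sum_subset (Finset.subset_univ _)
      (fun i _ h => Finsupp.notMem_support_iff.mp h)
  refine Finset.sum_bij' (fun l hl => (⟨Finsupp.toMultiset l, hkey l hl⟩ : Sym (Fin N) n))
    (fun a _ => Multiset.toFinsupp a.1) (fun a _ => Finset.mem_univ _) ?_ ?_ ?_ ?_
  · intro a _
    rw [Finset.mem_finsuppAntidiag]
    refine ⟨?_, Finset.subset_univ _⟩
    have h2 : ∑ i : Fin N, (Multiset.toFinsupp a.1) i =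
        (Multiset.toFinsupp a.1).sum fun _ => id := by
      rw [Finsupp.sum]
      exact (Finset.sum_subset (Finset.subset_univ _)
        (fun i _ h => Finsupp.notMem_support_iff.mp h)).symm
    rw [h2, ← Finsupp.card_toMultiset, Multiset.toFinsupp_toMultiset]
    exact a.2
  · intro l hl
    exact Finsupp.toMultiset_toFinsupp l
  · intro a ha
    exact Subtype.ext (Multiset.toFinsupp_toMultiset a.1)
  · intro l hl
    have h1 : Multiset.card
        (Nat.Partition.ofSym (⟨Finsupp.toMultiset l, hkey l hl⟩ : Sym (Fin N) n)).parts =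
        l.support.card := by
      show Multiset.card ((Finsupp.toMultiset l).dedup.map (Finsupp.toMultiset l).count) = _
      rw [Multiset.card_map, ← Multiset.card_toFinset, Finsupp.toFinset_toMultiset]
    have h2 : ((Finsupp.toMultiset l).map MvPolynomial.X).prod =
        (MvPolynomial.monomial l (1 : R)) := by
      rw [Finset.prod_multiset_map_count, Finsupp.toFinset_toMultiset,
        MvPolynomial.monomial_eq, map_one, one_mul, Finsupp.prod]
      exact Finset.prod_congr rfl (fun i _ => by rw [Finsupp.count_toMultiset])
    rw [h1, h2]
end
end

section
/- Define $b_n(X;t)$ by the generating function $\prod_{x \in X} \frac{1+xz}{1+txz} = \sum_{n \geq 0} b_n(X;t) z^n$. Then for all $n \geq 1$, $b_n = \sum_{|\lambda|=n} (-t)^{n-\ell(\lambda)} (1-t)^{\ell(\lambda)} m_\lambda$, where the sum ranges over partitions $\lambda$ of $n$. -/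
noncomputable section

open scoped Classical

theorem inv_one_add_aux (A : Type*) [CommRing A] (a : A) :
    Ring.inverse (1 + PowerSeries.C a * PowerSeries.X) = PowerSeries.mk fun k => (-a)^k := by
  have h : (1 + PowerSeries.C a * PowerSeries.X) * (PowerSeries.mk fun k => (-a)^k) = 1 := by
    ext n
    cases n with
    | zero => simp
    | succ m =>
      simp only [add_mul, one_mul, map_add, mul_assoc, PowerSeries.coeff_C_mul,
        PowerSeries.coeff_succ_X_mul, PowerSeries.coeff_mk, PowerSeries.coeff_one,
        Nat.succ_ne_zero, if_false]
      ring
  have : Ring.inverse ((Units.mkOfMulEqOne _ _ h : (PowerSeries A)ˣ) : PowerSeries A)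
      = ((Units.mkOfMulEqOne _ _ h)⁻¹ : (PowerSeries A)ˣ) := Ring.inverse_unit _
  exact this.trans (Units.inv_eq_of_mul_eq_one_right h)

theorem factor_coeff_aux (R : Type*) [CommRing R] (t : R) (N : ℕ) (i : Fin N) (k : ℕ) :
    PowerSeries.coeff k
      ((1 + PowerSeries.C (MvPolynomial.X i) * PowerSeries.X) *
        Ring.inverse (1 + PowerSeries.C (MvPolynomial.C t * MvPolynomial.X i) * PowerSeries.X))
      = if k = 0 then 1 else
          MvPolynomial.C ((1-t) * (-t)^(k-1)) * MvPolynomial.X i ^ k := by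
  rw [inv_one_add_aux]
  cases k with
  | zero => simp
  | succ m =>
    simp only [add_mul, one_mul, map_add, mul_assoc, PowerSeries.coeff_C_mul,
      PowerSeries.coeff_succ_X_mul, PowerSeries.coeff_mk, Nat.succ_ne_zero, if_false,
      Nat.add_sub_cancel]
    rw [map_mul, map_sub, map_one, map_pow, map_neg]
    ring

theorem prod_coeff_eq_aux (R : Type*) [CommRing R] (t : R) (N n : ℕ) (l : Fin N →₀ ℕ)
    (hl : ∑ i, l i = n) :
    (∏ i : Fin N, if l i = 0 then (1 : MvPolynomial (Fin N) R) else
        MvPolynomial.C ((1-t) * (-t)^(l i - 1)) * MvPolynomial.X i ^ l i)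
    = MvPolynomial.C ((-t) ^ (n - l.support.card) * (1 - t) ^ l.support.card) *
        ∏ i : Fin N, MvPolynomial.X i ^ l i := by
  have hsupp : ∑ i ∈ l.support, l i = n := by
    rw [← hl]
    exact Finset.sum_subset (Finset.subset_univ _) (fun x _ hx => by
      simpa [Finsupp.mem_support_iff] using hx)
  have hsub : ∑ i ∈ l.support, (l i - 1) = n - l.support.card := by
    have h1 : ∑ i ∈ l.support, ((l i - 1) + 1) = n := by
      rw [← hsupp]
      exact Finset.sum_congr rfl fun x hx => Nat.sub_add_cancel
        (Nat.one_le_iff_ne_zero.mpr (Finsupp.mem_support_iff.mp hx))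
    rw [Finset.sum_add_distrib, Finset.sum_const, smul_eq_mul, mul_one] at h1
    omega
  rw [← Finset.prod_subset (Finset.subset_univ l.support)
    (fun x _ hx => by simp [Finsupp.notMem_support_iff.mp hx])]
  have hX : ∏ i ∈ l.support, MvPolynomial.X (R := R) i ^ l i
      = ∏ i : Fin N, MvPolynomial.X i ^ l i :=
    Finset.prod_subset (Finset.subset_univ _) (fun x _ hx => by
      simp [Finsupp.notMem_support_iff.mp hx])
  calc (∏ i ∈ l.support, if l i = 0 then (1 : MvPolynomial (Fin N) R) else
        MvPolynomial.C ((1-t) * (-t)^(l i - 1)) * MvPolynomial.X i ^ l i)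
      = ∏ i ∈ l.support,
        MvPolynomial.C ((1-t) * (-t)^(l i - 1)) * MvPolynomial.X i ^ l i :=
        Finset.prod_congr rfl fun x hx => if_neg (Finsupp.mem_support_iff.mp hx)
    _ = MvPolynomial.C (∏ i ∈ l.support, (1-t) * (-t)^(l i - 1)) *
        ∏ i ∈ l.support, MvPolynomial.X i ^ l i := by
        rw [Finset.prod_mul_distrib, map_prod]
    _ = _ := by
        rw [hX, Finset.prod_mul_distrib, Finset.prod_const, Finset.prod_pow_eq_pow_sum, hsub,
          mul_comm ((1-t) ^ _)]

theorem sym_count_sum_aux (N n : ℕ) (a : Sym (Fin N) n) :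
    ∑ i : Fin N, Multiset.count i (↑a : Multiset (Fin N)) = n := by
  rw [← Finset.sum_subset (Finset.subset_univ (↑a : Multiset (Fin N)).toFinset)
    (fun x _ hx => by simpa [Multiset.count_eq_zero] using hx),
    Multiset.toFinset_sum_count_eq]
  exact a.2

theorem ofSym_card_aux (N n : ℕ) (a : Sym (Fin N) n) :
    Multiset.card (Nat.Partition.ofSym a).parts
      = (Multiset.toFinsupp (↑a : Multiset (Fin N))).support.card := by
  simp [Nat.Partition.ofSym, Multiset.toFinsupp_support, Multiset.toFinset]

theorem sym_prod_eq_aux (R : Type*) [CommRing R] (N n : ℕ) (a : Sym (Fin N) n) :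
    ((↑a : Multiset (Fin N)).map (MvPolynomial.X (R := R))).prod
      = ∏ i : Fin N, MvPolynomial.X i ^ Multiset.count i (↑a : Multiset (Fin N)) := by
  rw [Finset.prod_multiset_map_count]
  refine Finset.prod_subset (Finset.subset_univ _) (fun x _ hx => ?_)
  have : Multiset.count x (↑a : Multiset (Fin N)) = 0 := by
    rw [Multiset.count_eq_zero]
    simpa [Multiset.mem_toFinset] using hx
  simp [this]

/-- The generating function `∏_{i} (1 + xᵢ z)(1 + t xᵢ z)⁻¹ = Σₙ bₙ zⁿ`
over symmetric polynomials in the variables `x₁, …, x_N`. -/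
def betaGF (R : Type*) [CommRing R] (t : R) (N : ℕ) :
    PowerSeries (MvPolynomial (Fin N) R) :=
  ∏ i : Fin N,
    ((1 + PowerSeries.C (MvPolynomial.X i) * PowerSeries.X) *
      Ring.inverse (1 + PowerSeries.C (MvPolynomial.C t * MvPolynomial.X i) * PowerSeries.X))

/-- for `n ≥ 1`,
`bₙ = Σ_{|λ| = n} (-t)^{n-ℓ(λ)} (1-t)^{ℓ(λ)} m_λ`, the sum over partitions `λ` of `n`. -/
theorem b_eq_sum_monomial_symmetric (R : Type*) [CommRing R] (t : R) (N n : ℕ) (hn : 1 ≤ n) :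
    PowerSeries.coeff n (betaGF R t N) =
      ∑ P : Nat.Partition n,
        MvPolynomial.C ((-t) ^ (n - Multiset.card P.parts) * (1 - t) ^ Multiset.card P.parts) *
          MvPolynomial.msymm (Fin N) R P := by
  -- the common middle term, as a function of a symmetric word
  set F : Sym (Fin N) n → MvPolynomial (Fin N) R := fun a =>
    MvPolynomial.C ((-t) ^ (n - Multiset.card (Nat.Partition.ofSym a).parts) *
      (1 - t) ^ Multiset.card (Nat.Partition.ofSym a).parts) *
      ((↑a : Multiset (Fin N)).map MvPolynomial.X).prod with hF
  -- LHS computation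
  rw [betaGF, PowerSeries.coeff_prod]
  have hLHS : ∑ l ∈ Finset.finsuppAntidiag Finset.univ n,
      ∏ i : Fin N, (PowerSeries.coeff (l i))
        ((1 + PowerSeries.C (MvPolynomial.X i) * PowerSeries.X) *
          Ring.inverse (1 + PowerSeries.C (MvPolynomial.C t * MvPolynomial.X i) *
            PowerSeries.X))
      = ∑ l ∈ Finset.finsuppAntidiag Finset.univ n,
        MvPolynomial.C ((-t) ^ (n - l.support.card) * (1 - t) ^ l.support.card) *
          ∏ i : Fin N, MvPolynomial.X i ^ l i := by
    refine Finset.sum_congr rfl fun l hl => ?_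
    have hsum : ∑ i, l i = n := ((Finset.mem_finsuppAntidiag).mp hl).1
    simp_rw [factor_coeff_aux]
    exact prod_coeff_eq_aux R t N n l hsum
  rw [hLHS]
  -- RHS computation: collapse the fibered sum
  have hRHS : ∑ P : Nat.Partition n,
      MvPolynomial.C ((-t) ^ (n - Multiset.card P.parts) * (1 - t) ^ Multiset.card P.parts) *
        MvPolynomial.msymm (Fin N) R P = ∑ a : Sym (Fin N) n, F a := by
    rw [← Finset.sum_fiberwise Finset.univ (fun a => Nat.Partition.ofSym a) F]
    refine Finset.sum_congr rfl fun P _ => ?_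
    rw [MvPolynomial.msymm, Finset.mul_sum,
      Finset.sum_subtype (p := fun a => Nat.Partition.ofSym a = P) _ (fun a => by simp) F]
    refine Finset.sum_congr rfl fun s _ => ?_
    have hs := s.2
    simp only [hF, hs]
    rfl
  rw [hRHS]
  -- now the bijection between symmetric words and finsupps
  symm
  refine Finset.sum_bij'
    (fun (a : Sym (Fin N) n) _ => Multiset.toFinsupp (↑a : Multiset (Fin N)))
    (fun l hl => (⟨Finsupp.toMultiset l, by
        have hsum : ∑ i, l i = n := (Finset.mem_finsuppAntidiag.mp hl).1
        rw [Finsupp.card_toMultiset, Finsupp.sum, ← hsum]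
        exact Finset.sum_subset (Finset.subset_univ _) (fun x _ hx => by
          simpa [Finsupp.mem_support_iff] using hx)⟩ : Sym (Fin N) n))
    ?_ ?_ ?_ ?_ ?_
  · intro a _
    rw [Finset.mem_finsuppAntidiag]
    refine ⟨?_, Finset.subset_univ _⟩
    exact (Finset.sum_congr rfl fun i _ => Multiset.toFinsupp_apply _ _).trans
      (sym_count_sum_aux N n a)
  · intro l hl
    exact Finset.mem_univ _
  · intro a _
    exact Subtype.ext (Multiset.toFinsupp_toMultiset _)
  · intro l _
    exact Finsupp.toMultiset_toFinsupp l
  · intro a _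
    simp only [hF]
    rw [ofSym_card_aux, sym_prod_eq_aux]
    simp [Multiset.toFinsupp_apply]
end
end

section
/- With the inner product determined by $(q_\lambda, m_\mu) = \delta_{\lambda\mu}$, the adjoint of multiplication by $b_k$ acts on $q_n$ by: $b_k^\perp q_n = q_n$ if $k = 0$, and $b_k^\perp q_n = (-t)^{k-1}(1-t) q_{n-k}$ if $k > 0$ (interpreting $q_m = 0$ for $m < 0$). -/
noncomputable section

open scoped Classical

/-- The monomial symmetric function `m_μ` in countably many variables, as a power series. -/
def mms (K : Type*) [CommRing K] (mu : Multiset ℕ) : MvPowerSeries ℕ K :=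
  fun d => if Multiset.map (fun i => d i) d.support.val = mu then 1 else 0

/-- `qₙ(X;t) = Σ_{|λ|=n} (1-t)^{ℓ(λ)} m_λ` (the coefficient of `zⁿ` in `∏ₓ (1-txz)/(1-xz)`). -/
def qq (K : Type*) [CommRing K] (t : K) (n : ℕ) : MvPowerSeries ℕ K :=
  ∑ P : Nat.Partition n, ((1 - t) ^ Multiset.card P.parts) • mms K P.parts

/-- `b_k(X;t) = Σ_{|λ|=k} (-t)^{k-ℓ(λ)} (1-t)^{ℓ(λ)} m_λ`. -/
def bb (K : Type*) [CommRing K] (t : K) (k : ℕ) : MvPowerSeries ℕ K :=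
  ∑ P : Nat.Partition k,
    ((-t) ^ (k - Multiset.card P.parts) * (1 - t) ^ Multiset.card P.parts) • mms K P.parts

/-- `q_λ = q_{λ₁} q_{λ₂} ⋯` for a partition `λ` given as a multiset of positive parts. -/
def qprod (K : Type*) [CommRing K] (t : K) (lam : Multiset ℕ) : MvPowerSeries ℕ K :=
  (lam.map (qq K t)).prod

/-- The ring `Λ(t)` of symmetric functions, realized as the span of the `m_λ`
over partitions `λ` (multisets of positive integers). -/
def mspan (K : Type*) [CommRing K] : Submodule K (MvPowerSeries ℕ K) :=
  Submodule.span K {F | ∃ mu : Multiset ℕ, (∀ x ∈ mu, 0 < x) ∧ F = mms K mu}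

def multOf (d : ℕ →₀ ℕ) : Multiset ℕ := Multiset.map (fun i => d i) d.support.val

theorem coeff_mms (K : Type*) [CommRing K] (mu : Multiset ℕ) (d : ℕ →₀ ℕ) :
    MvPowerSeries.coeff (R := K) d (mms K mu) = if multOf d = mu then 1 else 0 := rfl

theorem multOf_pos (d : ℕ →₀ ℕ) : ∀ x ∈ multOf d, 0 < x := by
  intro x hx
  obtain ⟨i, hi, rfl⟩ := Multiset.mem_map.1 hx
  exact Nat.pos_of_ne_zero (Finsupp.mem_support_iff.1 hi)

theorem multOf_sum (d : ℕ →₀ ℕ) : (multOf d).sum = d.sum fun _ v => v := rfl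

theorem multOf_add (a b : ℕ →₀ ℕ) :
    (multOf (a + b)).sum = (multOf a).sum + (multOf b).sum := by
  simp only [multOf_sum]
  exact Finsupp.sum_add_index' (fun _ => rfl) (fun _ _ _ => rfl)

theorem multOf_eq_zero_iff (d : ℕ →₀ ℕ) : multOf d = 0 ↔ d = 0 := by
  rw [multOf, Multiset.map_eq_zero, Finset.val_eq_zero, Finsupp.support_eq_empty]

theorem multOf_single (a n : ℕ) (hn : n ≠ 0) : multOf (Finsupp.single a n) = {n} := by
  rw [multOf, Finsupp.support_single_ne_zero a hn]
  simp

def rep (nu : Multiset ℕ) : ℕ →₀ ℕ :=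
  Finsupp.onFinset (Finset.range nu.toList.length) (fun i => nu.toList.getD i 0)
    (fun _ hi => Finset.mem_range.2 (lt_of_not_ge fun hle => hi (List.getD_eq_default _ _ hle)))

theorem multOf_rep (nu : Multiset ℕ) (hnu : ∀ x ∈ nu, 0 < x) : multOf (rep nu) = nu := by
  have hsupp : (rep nu).support = Finset.range nu.toList.length := by
    apply Finset.Subset.antisymm
    · exact Finsupp.support_onFinset_subset
    · intro i hi
      rw [Finset.mem_range] at hi
      rw [Finsupp.mem_support_iff]
      show nu.toList.getD i 0 ≠ 0
      rw [List.getD_eq_getElem _ _ hi]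
      exact (hnu _ (by rw [← Multiset.mem_toList]; exact List.getElem_mem _)).ne'
  rw [multOf, hsupp, Finset.range_val]
  have hmap : Multiset.map (fun i => (rep nu) i) (Multiset.range nu.toList.length)
      = (nu.toList : Multiset ℕ) := by
    rw [Multiset.range, Multiset.map_coe]
    congr 1
    apply List.ext_getElem
    · simp
    · intro i h1 h2
      simp only [List.getElem_map, List.getElem_range]
      show nu.toList.getD i 0 = _
      rw [List.getD_eq_getElem _ _ h2]
  rw [hmap, Multiset.coe_toList]

theorem exists_equiv_of_map_eq {α β : Type*} [DecidableEq α] {f g : α → β} (s : Finset α) :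
    ∀ t : Finset α, s.val.map f = t.val.map g →
      ∃ e : {x // x ∈ s} ≃ {x // x ∈ t}, ∀ x : {x // x ∈ s}, f x = g (e x) := by
  classical
  induction s using Finset.induction_on with
  | empty =>
    intro t ht
    have hte : t = ∅ := by
      have := congrArg Multiset.card ht
      simpa [Finset.card_eq_zero] using this.symm
    subst hte
    have h1 : IsEmpty {x // x ∈ (∅ : Finset α)} := by exact ⟨fun x => Finset.notMem_empty _ x.2⟩
    exact ⟨Equiv.equivOfIsEmpty _ _, fun x => absurd x.2 (Finset.notMem_empty _)⟩
  | @insert a s' ha ih =>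
    intro t ht
    rw [Finset.insert_val_of_notMem ha, Multiset.map_cons] at ht
    have hfa : f a ∈ t.val.map g := by rw [← ht]; exact Multiset.mem_cons_self _ _
    obtain ⟨b, hb, hgb⟩ := Multiset.mem_map.1 hfa
    have hbt : b ∈ t := hb
    have hterase : t.val = b ::ₘ (t.erase b).val := by
      rw [Finset.erase_val]
      exact (Multiset.cons_erase hb).symm
    have ht' : s'.val.map f = (t.erase b).val.map g := by
      rw [hterase, Multiset.map_cons, ← hgb] at ht
      exact (Multiset.cons_inj_right _).1 ht
    obtain ⟨e', he'⟩ := ih (t.erase b) ht'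
    have hbe : ∀ y : {x // x ∈ t.erase b}, (y : α) ≠ b :=
      fun y => Finset.ne_of_mem_erase y.2
    refine ⟨⟨fun x => if h : (x : α) = a then ⟨b, hbt⟩
        else ⟨e' ⟨x, Finset.mem_of_mem_insert_of_ne x.2 h⟩,
          Finset.mem_of_mem_erase (e' _).2⟩,
      fun y => if h : (y : α) = b then ⟨a, Finset.mem_insert_self _ _⟩
        else ⟨e'.symm ⟨y, Finset.mem_erase.2 ⟨h, y.2⟩⟩,
          Finset.mem_insert_of_mem (e'.symm _).2⟩, ?_, ?_⟩, ?_⟩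
    · intro x
      by_cases h : (x : α) = a
      · simp only [dif_pos h]
        rw [dif_pos trivial]; exact Subtype.ext h.symm
      · simp only [dif_neg h]
        rw [dif_neg (hbe _)]; simp only [Subtype.coe_eta, Equiv.symm_apply_apply]
    · intro y
      by_cases h : (y : α) = b
      · simp only [dif_pos h]
        rw [dif_pos trivial]; exact Subtype.ext h.symm
      · simp only [dif_neg h]
        have hne : (e'.symm ⟨(y:α), Finset.mem_erase.2 ⟨h, y.2⟩⟩ : α) ≠ a := fun hcon => ha (hcon ▸ (e'.symm _).2)
        rw [dif_neg hne]; simp only [Subtype.coe_eta, Equiv.apply_symm_apply]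
    · intro x
      by_cases h : (x : α) = a
      · simp only [Equiv.coe_fn_mk, dif_pos h]
        rw [h, hgb]
      · simp only [Equiv.coe_fn_mk, dif_neg h]
        exact he' ⟨x, Finset.mem_of_mem_insert_of_ne x.2 h⟩

theorem exists_perm_of_multOf_eq {d d' : ℕ →₀ ℕ} (h : multOf d = multOf d') :
    ∃ σ : Equiv.Perm ℕ, ∀ x, d' (σ x) = d x := by
  classical
  obtain ⟨e, he⟩ := exists_equiv_of_map_eq d.support d'.support h
  haveI : Infinite ((↑d.support : Set ℕ)ᶜ : Set ℕ) :=
    (d.support.finite_toSet.infinite_compl).to_subtype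
  haveI : Infinite ((↑d'.support : Set ℕ)ᶜ : Set ℕ) :=
    (d'.support.finite_toSet.infinite_compl).to_subtype
  obtain ⟨D1⟩ := nonempty_denumerable ((↑d.support : Set ℕ)ᶜ : Set ℕ)
  obtain ⟨D2⟩ := nonempty_denumerable ((↑d'.support : Set ℕ)ᶜ : Set ℕ)
  refine ⟨(Equiv.Set.sumCompl (↑d.support : Set ℕ)).symm.trans
    ((Equiv.sumCongr e ((@Denumerable.eqv _ D1).trans (@Denumerable.eqv _ D2).symm)).trans
      (Equiv.Set.sumCompl (↑d'.support : Set ℕ))), ?_⟩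
  intro x
  by_cases hx : x ∈ d.support
  · have hmem : x ∈ (↑d.support : Set ℕ) := hx
    simp only [Equiv.trans_apply, Equiv.Set.sumCompl_symm_apply_of_mem hmem,
      Equiv.sumCongr_apply, Sum.map_inl, Equiv.Set.sumCompl_apply_inl]
    exact (he ⟨x, hx⟩).symm
  · have hx' : x ∉ (↑d.support : Set ℕ) := hx
    simp only [Equiv.trans_apply, Equiv.Set.sumCompl_symm_apply_of_notMem hx',
      Equiv.sumCongr_apply, Sum.map_inr, Equiv.Set.sumCompl_apply_inr]
    rw [Finsupp.notMem_support_iff.1 hx]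
    exact Finsupp.notMem_support_iff.1 (((@Denumerable.eqv _ D2).symm _).2)

theorem multOf_equivMapDomain (σ : Equiv.Perm ℕ) (d : ℕ →₀ ℕ) :
    multOf (Finsupp.equivMapDomain σ d) = multOf d := by
  unfold multOf
  rw [show (Finsupp.equivMapDomain σ d).support = d.support.map σ.toEmbedding from rfl,
    Finset.map_val, Multiset.map_map]
  apply Multiset.map_congr rfl
  intro x _
  simp [Finsupp.equivMapDomain_apply]

theorem equivMapDomain_add (σ : Equiv.Perm ℕ) (a b : ℕ →₀ ℕ) :
    Finsupp.equivMapDomain σ (a + b) =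
      Finsupp.equivMapDomain σ a + Finsupp.equivMapDomain σ b := by
  ext x
  simp [Finsupp.equivMapDomain_apply]

theorem emd_cancel (σ : Equiv.Perm ℕ) (u : ℕ →₀ ℕ) :
    Finsupp.equivMapDomain σ (Finsupp.equivMapDomain σ.symm u) = u := by
  ext y; simp [Finsupp.equivMapDomain_apply]

theorem mul_mms_symm (K : Type*) [CommRing K] (lam mu : Multiset ℕ) {d d' : ℕ →₀ ℕ}
    (h : multOf d = multOf d') :
    MvPowerSeries.coeff (R := K) d' (mms K lam * mms K mu) =
      MvPowerSeries.coeff (R := K) d (mms K lam * mms K mu) := by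
  obtain ⟨σ, hσ⟩ := exists_perm_of_multOf_eq h
  have hd' : d' = Finsupp.equivMapDomain σ d := by
    ext y
    rw [Finsupp.equivMapDomain_apply]
    conv_lhs => rw [show y = σ (σ.symm y) by simp]
    rw [hσ]
  subst hd'
  rw [MvPowerSeries.coeff_mul, MvPowerSeries.coeff_mul]
  apply Finset.sum_equiv
    ((Finsupp.equivCongrLeft σ.symm).prodCongr (Finsupp.equivCongrLeft σ.symm))
  · intro p
    simp only [Finset.HasAntidiagonal.mem_antidiagonal, Equiv.prodCongr_apply, Prod.map,
      Finsupp.equivCongrLeft_apply]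
    constructor
    · intro hp
      have h2 := congrArg (Finsupp.equivMapDomain σ.symm) hp
      rw [equivMapDomain_add] at h2
      rw [h2]
      ext y; simp [Finsupp.equivMapDomain_apply]
    · intro hp
      have h2 := congrArg (Finsupp.equivMapDomain σ) hp
      rw [equivMapDomain_add, emd_cancel, emd_cancel] at h2
      exact h2
  · intro p _
    simp only [Equiv.prodCongr_apply, Prod.map, Finsupp.equivCongrLeft_apply]
    rw [coeff_mms, coeff_mms, coeff_mms, coeff_mms,
      multOf_equivMapDomain σ.symm, multOf_equivMapDomain σ.symm]

theorem mem_mspan_of_symm (K : Type*) [CommRing K] (F : MvPowerSeries ℕ K) (N : ℕ)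
    (hsym : ∀ d d' : ℕ →₀ ℕ, multOf d = multOf d' →
      MvPowerSeries.coeff (R := K) d F = MvPowerSeries.coeff (R := K) d' F)
    (hdeg : ∀ d : ℕ →₀ ℕ, MvPowerSeries.coeff (R := K) d F ≠ 0 → (multOf d).sum = N) :
    F ∈ mspan K := by
  have hF : F = ∑ P : Nat.Partition N,
      (MvPowerSeries.coeff (R := K) (rep P.parts) F) • mms K P.parts := by
    apply MvPowerSeries.ext
    intro d
    rw [map_sum]
    by_cases hd : (multOf d).sum = N
    · set P0 : Nat.Partition N := ⟨multOf d, fun {i} hi => multOf_pos d i hi, hd⟩ with hP0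
      rw [Finset.sum_eq_single P0]
      · rw [map_smul, smul_eq_mul, coeff_mms]
        rw [if_pos rfl]
        rw [mul_one]
        exact hsym _ _ (multOf_rep _ (multOf_pos d)).symm
      · intro P _ hP
        rw [map_smul, smul_eq_mul, coeff_mms, if_neg, mul_zero]
        intro hcon
        exact hP (by apply Nat.Partition.ext; rw [← hcon])
      · intro h; exact absurd (Finset.mem_univ _) h
    · rw [Finset.sum_eq_zero]
      · by_contra hne
        exact hd (hdeg d hne)
      · intro P _
        rw [map_smul, smul_eq_mul, coeff_mms, if_neg, mul_zero]
        intro hcon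
        exact hd (by rw [hcon]; exact P.parts_sum)
  rw [hF]
  apply Submodule.sum_mem
  intro P _
  apply Submodule.smul_mem
  exact Submodule.subset_span ⟨P.parts, fun x hx => P.parts_pos hx, rfl⟩

theorem mul_mms_mem (K : Type*) [CommRing K] (lam mu : Multiset ℕ) :
    mms K lam * mms K mu ∈ mspan K := by
  apply mem_mspan_of_symm K _ (lam.sum + mu.sum)
  · intro d d' h
    exact (mul_mms_symm K lam mu h).symm
  · intro d hne
    rw [MvPowerSeries.coeff_mul] at hne
    obtain ⟨p, hp, hpne⟩ := Finset.exists_ne_zero_of_sum_ne_zero hne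
    rw [Finset.HasAntidiagonal.mem_antidiagonal] at hp
    have h1 : multOf p.1 = lam := by
      by_contra hcon
      rw [coeff_mms, if_neg hcon, zero_mul] at hpne
      exact hpne rfl
    have h2 : multOf p.2 = mu := by
      by_contra hcon
      rw [coeff_mms, coeff_mms, if_neg hcon, mul_zero] at hpne
      exact hpne rfl
    rw [← hp, multOf_add, h1, h2]

theorem bb_mul_mem (K : Type*) [CommRing K] (t : K) (k : ℕ) {H : MvPowerSeries ℕ K}
    (hH : H ∈ mspan K) : bb K t k * H ∈ mspan K := by
  refine Submodule.span_induction ?_ ?_ ?_ ?_ hH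
  · rintro F ⟨mu, hmu, rfl⟩
    rw [bb, Finset.sum_mul]
    apply Submodule.sum_mem
    intro P _
    rw [smul_mul_assoc]
    exact Submodule.smul_mem _ _ (mul_mms_mem K P.parts mu)
  · rw [mul_zero]; exact Submodule.zero_mem _
  · intro F G _ _ hF hG
    rw [mul_add]; exact Submodule.add_mem _ hF hG
  · intro c F _ hF
    rw [mul_smul_comm]; exact Submodule.smul_mem _ _ hF

theorem mms_zero_eq_one (K : Type*) [CommRing K] : mms K 0 = 1 := by
  apply MvPowerSeries.ext
  intro d
  rw [coeff_mms, MvPowerSeries.coeff_one]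
  simp [multOf_eq_zero_iff]

theorem qq_eq_qprod (K : Type*) [CommRing K] (t : K) (n : ℕ) :
    qq K t n = qprod K t (if n = 0 then 0 else {n}) := by
  by_cases hn : n = 0
  · subst hn
    rw [if_pos rfl, qprod, Multiset.map_zero, Multiset.prod_zero, qq]
    rw [Fintype.sum_unique]
    simp only [Nat.Partition.partition_zero_parts]
    rw [Multiset.card_zero, pow_zero, one_smul, mms_zero_eq_one]
  · rw [if_neg hn, qprod, Multiset.map_singleton, Multiset.prod_singleton]

theorem B_qq_eq_coeff (K : Type*) [Field K] (t : K)
    (B : MvPowerSeries ℕ K →ₗ[K] MvPowerSeries ℕ K →ₗ[K] K)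
    (hB : ∀ lam mu : Multiset ℕ, (∀ x ∈ lam, 0 < x) → (∀ x ∈ mu, 0 < x) →
      B (qprod K t lam) (mms K mu) = if lam = mu then 1 else 0)
    (n : ℕ) {H : MvPowerSeries ℕ K} (hH : H ∈ mspan K) :
    B (qq K t n) H = MvPowerSeries.coeff (R := K) (Finsupp.single 0 n) H := by
  set lam : Multiset ℕ := if n = 0 then 0 else {n} with hlam
  have hlampos : ∀ x ∈ lam, 0 < x := by
    intro x hx
    rw [hlam] at hx
    by_cases hn : n = 0
    · rw [if_pos hn] at hx; exact absurd hx (Multiset.notMem_zero x)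
    · rw [if_neg hn] at hx
      rw [Multiset.mem_singleton] at hx
      exact hx ▸ Nat.pos_of_ne_zero hn
  have hmult : multOf (Finsupp.single 0 n) = lam := by
    by_cases hn : n = 0
    · rw [hlam, if_pos hn, hn, Finsupp.single_zero, multOf_eq_zero_iff]
    · rw [hlam, if_neg hn, multOf_single 0 n hn]
  rw [qq_eq_qprod, ← hlam]
  have := LinearMap.eqOn_span (s := {F | ∃ mu : Multiset ℕ, (∀ x ∈ mu, 0 < x) ∧ F = mms K mu})
    (f := B (qprod K t lam)) (g := MvPowerSeries.coeff (R := K) (Finsupp.single 0 n)) ?_ hH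
  · exact this
  · rintro F ⟨mu, hmu, rfl⟩
    rw [hB lam mu hlampos hmu, coeff_mms, hmult]

theorem bb_coeff (K : Type*) [CommRing K] (t : K) (k a : ℕ) :
    MvPowerSeries.coeff (R := K) (Finsupp.single 0 a) (bb K t k) =
      if a = k then (if k = 0 then 1 else (-t) ^ (k - 1) * (1 - t)) else 0 := by
  rw [bb, map_sum]
  have hterm : ∀ P : Nat.Partition k,
      MvPowerSeries.coeff (R := K) (Finsupp.single 0 a)
        (((-t) ^ (k - Multiset.card P.parts) * (1 - t) ^ Multiset.card P.parts) • mms K P.parts)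
      = ((-t) ^ (k - Multiset.card P.parts) * (1 - t) ^ Multiset.card P.parts) *
        (if multOf (Finsupp.single 0 a) = P.parts then 1 else 0) := by
    intro P
    rw [map_smul, smul_eq_mul, coeff_mms]
  by_cases hk : k = 0
  · subst hk
    rw [Fintype.sum_unique, hterm]
    simp only [Nat.Partition.partition_zero_parts, Multiset.card_zero, Nat.zero_sub,
      pow_zero, one_mul, mul_ite, mul_one, mul_zero]
    by_cases ha : a = 0
    · subst ha
      rw [if_pos (by rw [multOf_eq_zero_iff]; simp), if_pos rfl]
      rw [if_pos trivial]
    · rw [if_neg, if_neg ha]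
      rw [multOf_eq_zero_iff]
      simp [Finsupp.single_eq_zero, ha]
  · by_cases hak : a = k
    · subst hak
      rw [Finset.sum_eq_single (Nat.Partition.indiscrete a)]
      · rw [hterm]
        rw [Nat.Partition.indiscrete_parts hk, multOf_single 0 a hk, if_pos rfl, mul_one]
        simp only [Multiset.card_singleton, pow_one, if_neg hk]
        rw [if_pos trivial]
      · intro P _ hP
        rw [hterm, if_neg, mul_zero]
        rw [multOf_single 0 a hk]
        intro hcon
        exact hP (by apply Nat.Partition.ext; rw [← hcon, Nat.Partition.indiscrete_parts hk])
      · intro h; exact absurd (Finset.mem_univ _) h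
    · rw [if_neg hak, Finset.sum_eq_zero]
      intro P _
      rw [hterm, if_neg, mul_zero]
      intro hcon
      by_cases ha : a = 0
      · subst ha
        rw [show (Finsupp.single 0 0 : ℕ →₀ ℕ) = 0 from Finsupp.single_zero 0,
          show multOf 0 = 0 from (multOf_eq_zero_iff 0).2 rfl] at hcon
        have := P.parts_sum
        rw [← hcon] at this
        exact hak (by simp at this; omega)
      · rw [multOf_single 0 a ha] at hcon
        have := P.parts_sum
        rw [← hcon] at this
        simp at this
        exact hak this

theorem coeff_bb_mul (K : Type*) [CommRing K] (t : K) (k n : ℕ) (F : MvPowerSeries ℕ K) :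
    MvPowerSeries.coeff (R := K) (Finsupp.single 0 n) (bb K t k * F) =
      if k ≤ n then
        (if k = 0 then 1 else (-t) ^ (k - 1) * (1 - t)) *
          MvPowerSeries.coeff (R := K) (Finsupp.single 0 (n - k)) F
      else 0 := by
  rw [MvPowerSeries.coeff_mul, Finsupp.antidiagonal_single, Finset.sum_map]
  have hterm : ∀ p : ℕ × ℕ,
      MvPowerSeries.coeff (R := K) ((Function.Embedding.prodMap
          ⟨_, Finsupp.single_injective 0⟩ ⟨_, Finsupp.single_injective 0⟩) p).1 (bb K t k) *
        MvPowerSeries.coeff (R := K) ((Function.Embedding.prodMap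
          ⟨_, Finsupp.single_injective 0⟩ ⟨_, Finsupp.single_injective 0⟩) p).2 F =
      (if p.1 = k then (if k = 0 then 1 else (-t) ^ (k - 1) * (1 - t)) else 0) *
        MvPowerSeries.coeff (R := K) (Finsupp.single 0 p.2) F := by
    intro p
    rw [Function.Embedding.coe_prodMap]
    simp only [Prod.map, Function.Embedding.coeFn_mk]
    rw [bb_coeff]
  by_cases hkn : k ≤ n
  · rw [if_pos hkn]
    rw [Finset.sum_eq_single_of_mem (k, n - k)
      (Finset.HasAntidiagonal.mem_antidiagonal.2 (Nat.add_sub_cancel' hkn))]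
    · rw [hterm, if_pos rfl]
    · intro p hp hpne
      rw [hterm]
      rw [Finset.HasAntidiagonal.mem_antidiagonal] at hp
      rw [if_neg, zero_mul]
      intro hcon
      apply hpne
      have : p.2 = n - k := by omega
      exact Prod.ext hcon this
  · rw [if_neg hkn, Finset.sum_eq_zero]
    intro p hp
    rw [hterm, if_neg, zero_mul]
    rw [Finset.HasAntidiagonal.mem_antidiagonal] at hp
    omega

/-- with the inner product `B` determined by `(q_λ, m_μ) = δ_{λμ}`, the adjoint
of multiplication by `b_k` satisfies `b_k^⊥ qₙ = qₙ` if `k = 0` and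
`b_k^⊥ qₙ = (-t)^{k-1}(1-t) q_{n-k}` if `k > 0` (with `q_m = 0` for `m < 0`);
i.e. `(qₙ, b_k H) = (-t)^{k-1}(1-t)(q_{n-k}, H)` for all symmetric functions `H`. -/
theorem b_perp_q (K : Type*) [Field K] (t : K)
    (B : MvPowerSeries ℕ K →ₗ[K] MvPowerSeries ℕ K →ₗ[K] K)
    (hB : ∀ lam mu : Multiset ℕ, (∀ x ∈ lam, 0 < x) → (∀ x ∈ mu, 0 < x) →
      B (qprod K t lam) (mms K mu) = if lam = mu then 1 else 0)
    (n k : ℕ) (H : MvPowerSeries ℕ K) (hH : H ∈ mspan K) :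
    B (qq K t n) (bb K t k * H) =
      if k = 0 then B (qq K t n) H
      else if k ≤ n then (-t) ^ (k - 1) * (1 - t) * B (qq K t (n - k)) H
      else 0 := by
  have hmem : bb K t k * H ∈ mspan K := bb_mul_mem K t k hH
  rw [B_qq_eq_coeff K t B hB n hmem, coeff_bb_mul]
  by_cases hk : k = 0
  · subst hk
    rw [if_pos (Nat.zero_le n), if_pos rfl, if_pos rfl, one_mul, Nat.sub_zero,
      B_qq_eq_coeff K t B hB n hH]
  · by_cases hkn : k ≤ n
    · rw [if_pos hkn, if_neg hk, if_neg hk, if_pos hkn, B_qq_eq_coeff K t B hB (n - k) hH]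
    · rw [if_neg hkn, if_neg hk, if_neg hkn]
end
end
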